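/- Discrete summation-by-parts for the cross-direction viscous term under periodic boundary conditions (Proposition A.5). Suppose φ is a cell-centered grid function, u, γ are east-west edge-centered grid functions and all three are doubly periodic with periods m₁ and m₂ (i.e. φ_{i+m₁,j} = φ_{i,j+m₂} = φ_{i,j}, and likewise for u and γ in the edge indexing). Then h²[𝔇_y(𝒜φ·𝒟_yu), γ]_ew = −h²⟨φ·𝒟_yu, 𝒟_yγ⟩_vc, where 𝒜φ·𝒟_yu denotes the vertex-centered pointwise product. Analogously, if v, ω are doubly periodic north-south edge-centered grid functions, then h²[𝔇_x(𝒜φ·𝒟_xv), ω]_ns = −h²⟨φ·𝒟_xv, 𝒟_xω⟩_vc. -/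

import Mathlib

open Finset

/-! Staggered-grid notation.  A grid function is a map `ℤ → ℤ → ℝ`.
For a cell-centered function `φ`, `φ i j` is the value `φ_{i,j}`.
For an east-west edge-centered function `u`, `u i j` is the value `u_{i+1/2,j}`.
For a north-south edge-centered function `v`, `v i j` is the value `v_{i,j+1/2}`.
For a vertex-centered function `f`, `f i j` is the value `f_{i+1/2,j+1/2}`. -/
abbrev GridFn := ℤ → ℤ → ℝ

/-- pointwise product of grid functions -/
noncomputable def gmul (f g : GridFn) : GridFn := fun i j => f i j * g i j

/-- the constant grid function `1` -/
noncomputable def oneG : GridFn := fun _ _ => (1 : ℝ)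

/-- edge-to-center average `a_x u_{i,j} = (u_{i+1/2,j}+u_{i-1/2,j})/2` -/
noncomputable def aX (u : GridFn) : GridFn := fun i j => (u i j + u (i - 1) j) / 2
/-- edge-to-center difference `d_x u_{i,j} = (u_{i+1/2,j}-u_{i-1/2,j})/h` -/
noncomputable def dX (h : ℝ) (u : GridFn) : GridFn := fun i j => (u i j - u (i - 1) j) / h
/-- edge-to-center average `a_y v_{i,j} = (v_{i,j+1/2}+v_{i,j-1/2})/2` -/
noncomputable def aY (v : GridFn) : GridFn := fun i j => (v i j + v i (j - 1)) / 2
/-- edge-to-center difference `d_y v_{i,j} = (v_{i,j+1/2}-v_{i,j-1/2})/h` -/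
noncomputable def dY (h : ℝ) (v : GridFn) : GridFn := fun i j => (v i j - v i (j - 1)) / h

/-- center-to-edge average `A_x φ_{i+1/2,j} = (φ_{i+1,j}+φ_{i,j})/2` -/
noncomputable def AX (φ : GridFn) : GridFn := fun i j => (φ (i + 1) j + φ i j) / 2
/-- center-to-edge difference `D_x φ_{i+1/2,j} = (φ_{i+1,j}-φ_{i,j})/h` -/
noncomputable def DX (h : ℝ) (φ : GridFn) : GridFn := fun i j => (φ (i + 1) j - φ i j) / h
/-- center-to-edge average `A_y φ_{i,j+1/2} = (φ_{i,j+1}+φ_{i,j})/2` -/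
noncomputable def AY (φ : GridFn) : GridFn := fun i j => (φ i (j + 1) + φ i j) / 2
/-- center-to-edge difference `D_y φ_{i,j+1/2} = (φ_{i,j+1}-φ_{i,j})/h` -/
noncomputable def DY (h : ℝ) (φ : GridFn) : GridFn := fun i j => (φ i (j + 1) - φ i j) / h

/-- center-to-vertex average `𝒜φ_{i+1/2,j+1/2}` -/
noncomputable def cavV (φ : GridFn) : GridFn :=
  fun i j => (φ i j + φ (i + 1) j + φ i (j + 1) + φ (i + 1) (j + 1)) / 4
/-- vertex-to-center average (the four vertices surrounding cell `(i,j)`) -/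
noncomputable def vavC (f : GridFn) : GridFn :=
  fun i j => (f (i - 1) (j - 1) + f i (j - 1) + f (i - 1) j + f i j) / 4

/-- edge-to-vertex average `𝒜_x v_{i+1/2,j+1/2} = (v_{i+1,j+1/2}+v_{i,j+1/2})/2` -/
noncomputable def eAX (v : GridFn) : GridFn := fun i j => (v (i + 1) j + v i j) / 2
/-- edge-to-vertex difference `𝒟_x v_{i+1/2,j+1/2} = (v_{i+1,j+1/2}-v_{i,j+1/2})/h` -/
noncomputable def eDX (h : ℝ) (v : GridFn) : GridFn := fun i j => (v (i + 1) j - v i j) / h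
/-- edge-to-vertex average `𝒜_y u_{i+1/2,j+1/2} = (u_{i+1/2,j+1}+u_{i+1/2,j})/2` -/
noncomputable def eAY (u : GridFn) : GridFn := fun i j => (u i (j + 1) + u i j) / 2
/-- edge-to-vertex difference `𝒟_y u_{i+1/2,j+1/2} = (u_{i+1/2,j+1}-u_{i+1/2,j})/h` -/
noncomputable def eDY (h : ℝ) (u : GridFn) : GridFn := fun i j => (u i (j + 1) - u i j) / h

/-- vertex-to-edge average `𝔄_x f_{i,j+1/2} = (f_{i+1/2,j+1/2}+f_{i-1/2,j+1/2})/2` -/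
noncomputable def vAX (f : GridFn) : GridFn := fun i j => (f i j + f (i - 1) j) / 2
/-- vertex-to-edge difference `𝔇_x f_{i,j+1/2} = (f_{i+1/2,j+1/2}-f_{i-1/2,j+1/2})/h` -/
noncomputable def vDX (h : ℝ) (f : GridFn) : GridFn := fun i j => (f i j - f (i - 1) j) / h
/-- vertex-to-edge average `𝔄_y f_{i+1/2,j} = (f_{i+1/2,j+1/2}+f_{i+1/2,j-1/2})/2` -/
noncomputable def vAY (f : GridFn) : GridFn := fun i j => (f i j + f i (j - 1)) / 2
/-- vertex-to-edge difference `𝔇_y f_{i+1/2,j} = (f_{i+1/2,j+1/2}-f_{i+1/2,j-1/2})/h` -/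
noncomputable def vDY (h : ℝ) (f : GridFn) : GridFn := fun i j => (f i j - f i (j - 1)) / h

/-- cell-centered inner product `(φ,ψ)₂ = Σ_{i=1}^{m₁} Σ_{j=1}^{m₂} φ_{i,j}ψ_{i,j}` -/
noncomputable def ip2 (m₁ m₂ : ℤ) (φ ψ : GridFn) : ℝ :=
  ∑ i ∈ Icc 1 m₁, ∑ j ∈ Icc 1 m₂, φ i j * ψ i j

/-- east-west edge inner product `[u,γ]_ew = (a_x(uγ),1)₂` -/
noncomputable def ipEW (m₁ m₂ : ℤ) (u γ : GridFn) : ℝ := ip2 m₁ m₂ (aX (gmul u γ)) oneG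

/-- north-south edge inner product `[v,ω]_ns = (a_y(vω),1)₂` -/
noncomputable def ipNS (m₁ m₂ : ℤ) (v ω : GridFn) : ℝ := ip2 m₁ m₂ (aY (gmul v ω)) oneG


/-! ### Auxiliary machinery -/

lemma window_sum (m : ℤ) (f : ℤ → ℝ) (hf : ∀ j, f (j + m) = f j) (a : ℤ) :
    ∑ j ∈ Icc (1 + a) (m + a), f j = ∑ j ∈ Icc 1 m, f j := by
  induction a using Int.induction_on with
  | zero => simp
  | succ k ih =>
    rcases le_or_gt 1 m with hm | hm
    · have e1 : Icc (1 + ((k : ℤ) + 1)) (m + ((k : ℤ) + 1)) =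
        insert (m + (k : ℤ) + 1) (Icc (1 + (k : ℤ) + 1) (m + (k : ℤ))) := by
        ext x; simp only [mem_Icc, mem_insert]; omega
      have e2 : Icc (1 + (k : ℤ)) (m + (k : ℤ)) =
        insert (1 + (k : ℤ)) (Icc (1 + (k : ℤ) + 1) (m + (k : ℤ))) := by
        ext x; simp only [mem_Icc, mem_insert]; omega
      have h1 : (m + (k : ℤ) + 1) ∉ Icc (1 + (k:ℤ) + 1) (m + (k : ℤ)) := by
        simp only [mem_Icc]; omega
      have h2 : (1 + (k : ℤ)) ∉ Icc (1 + (k:ℤ) + 1) (m + (k : ℤ)) := by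
        simp only [mem_Icc]; omega
      have hv : f (m + (k : ℤ) + 1) = f (1 + (k : ℤ)) := by
        have := hf (1 + (k : ℤ)); rw [← this]; ring_nf
      rw [e1, sum_insert h1, hv, ← ih, e2, sum_insert h2]
    · rw [Icc_eq_empty (by omega), Icc_eq_empty (by omega)]
  | pred k ih =>
    rcases le_or_gt 1 m with hm | hm
    · have e1 : Icc (1 + (-(k : ℤ) - 1)) (m + (-(k : ℤ) - 1)) =
        insert (-(k : ℤ)) (Icc (1 - (k : ℤ)) (m - (k : ℤ) - 1)) := by
        ext x; simp only [mem_Icc, mem_insert]; omega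
      have e2 : Icc (1 + -(k : ℤ)) (m + -(k : ℤ)) =
        insert (m - (k : ℤ)) (Icc (1 - (k : ℤ)) (m - (k : ℤ) - 1)) := by
        ext x; simp only [mem_Icc, mem_insert]; omega
      have h1 : (-(k : ℤ)) ∉ Icc (1 - (k:ℤ)) (m - (k : ℤ) - 1) := by
        simp only [mem_Icc]; omega
      have h2 : (m - (k : ℤ)) ∉ Icc (1 - (k:ℤ)) (m - (k : ℤ) - 1) := by
        simp only [mem_Icc]; omega
      have hv : f (-(k : ℤ)) = f (m - (k : ℤ)) := by
        have := hf (-(k : ℤ)); rw [← this]; ring_nf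
      rw [e1, sum_insert h1, hv, ← ih, e2, sum_insert h2]
    · rw [Icc_eq_empty (by omega), Icc_eq_empty (by omega)]

lemma per_shift (m : ℤ) (f : ℤ → ℝ) (hf : ∀ j, f (j + m) = f j) (a : ℤ) :
    ∑ j ∈ Icc 1 m, f (j + a) = ∑ j ∈ Icc 1 m, f j := by
  have e : ∑ j ∈ Icc 1 m, f (j + a) = ∑ j ∈ Icc (1 + a) (m + a), f j := by
    rw [← Finset.map_add_right_Icc, Finset.sum_map]; rfl
  rw [e, window_sum m f hf a]

/-- abbreviation for the double sum -/
noncomputable def S2 (m₁ m₂ : ℤ) (f : GridFn) : ℝ :=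
  ∑ i ∈ Icc 1 m₁, ∑ j ∈ Icc 1 m₂, f i j

lemma S2_congr (m₁ m₂ : ℤ) {f g : GridFn} (hfg : ∀ i j, f i j = g i j) :
    S2 m₁ m₂ f = S2 m₁ m₂ g := by
  unfold S2
  exact sum_congr rfl fun i _ => sum_congr rfl fun j _ => hfg i j

lemma S2_add (m₁ m₂ : ℤ) (f g : GridFn) :
    S2 m₁ m₂ (fun i j => f i j + g i j) = S2 m₁ m₂ f + S2 m₁ m₂ g := by
  simp [S2, Finset.sum_add_distrib]

lemma S2_add4 (m₁ m₂ : ℤ) (a b c d : GridFn) :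
    S2 m₁ m₂ (fun i j => a i j + b i j + c i j + d i j)
      = S2 m₁ m₂ a + S2 m₁ m₂ b + S2 m₁ m₂ c + S2 m₁ m₂ d := by
  simp [S2, Finset.sum_add_distrib]

lemma S2_sub (m₁ m₂ : ℤ) (f g : GridFn) :
    S2 m₁ m₂ (fun i j => f i j - g i j) = S2 m₁ m₂ f - S2 m₁ m₂ g := by
  simp [S2, Finset.sum_sub_distrib]

lemma S2_neg (m₁ m₂ : ℤ) (f : GridFn) :
    S2 m₁ m₂ (fun i j => -(f i j)) = -(S2 m₁ m₂ f) := by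
  simp [S2]

lemma S2_div (m₁ m₂ : ℤ) (f : GridFn) (c : ℝ) :
    S2 m₁ m₂ (fun i j => f i j / c) = S2 m₁ m₂ f / c := by
  simp [S2, Finset.sum_div]

lemma S2_smul (m₁ m₂ : ℤ) (f : GridFn) (c : ℝ) :
    S2 m₁ m₂ (fun i j => c * f i j) = c * S2 m₁ m₂ f := by
  simp [S2, Finset.mul_sum]

lemma S2_shiftI (m₁ m₂ a : ℤ) (f : GridFn) (h1 : ∀ i j, f (i + m₁) j = f i j) :
    S2 m₁ m₂ (fun i j => f (i + a) j) = S2 m₁ m₂ f := by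
  unfold S2
  exact per_shift m₁ (fun i => ∑ j ∈ Icc 1 m₂, f i j) (fun i => by simp only [h1]) a

lemma S2_shiftJ (m₁ m₂ b : ℤ) (f : GridFn) (h2 : ∀ i j, f i (j + m₂) = f i j) :
    S2 m₁ m₂ (fun i j => f i (j + b)) = S2 m₁ m₂ f := by
  unfold S2
  exact sum_congr rfl fun i _ => per_shift m₂ (f i) (h2 i) b

lemma S2_shiftI_sub (m₁ m₂ : ℤ) (f : GridFn) (h1 : ∀ i j, f (i + m₁) j = f i j) :
    S2 m₁ m₂ (fun i j => f (i - 1) j) = S2 m₁ m₂ f := by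
  have e : (fun i j => f (i - 1) j) = fun i j => f (i + (-1)) j := by
    funext i j; rw [sub_eq_add_neg]
  rw [e]; exact S2_shiftI m₁ m₂ (-1) f h1

lemma S2_shiftJ_sub (m₁ m₂ : ℤ) (f : GridFn) (h2 : ∀ i j, f i (j + m₂) = f i j) :
    S2 m₁ m₂ (fun i j => f i (j - 1)) = S2 m₁ m₂ f := by
  have e : (fun i j => f i (j - 1)) = fun i j => f i (j + (-1)) := by
    funext i j; rw [sub_eq_add_neg]
  rw [e]; exact S2_shiftJ m₁ m₂ (-1) f h2

/-- the y-direction summation-by-parts identity -/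
lemma keyY (m₁ m₂ : ℤ) (h : ℝ) (φ u γ : GridFn)
    (hφ1 : ∀ i j : ℤ, φ (i + m₁) j = φ i j) (hφ2 : ∀ i j : ℤ, φ i (j + m₂) = φ i j)
    (hu1 : ∀ i j : ℤ, u (i + m₁) j = u i j) (hu2 : ∀ i j : ℤ, u i (j + m₂) = u i j)
    (hγ1 : ∀ i j : ℤ, γ (i + m₁) j = γ i j) (hγ2 : ∀ i j : ℤ, γ i (j + m₂) = γ i j) :
    h ^ 2 * ipEW m₁ m₂ (vDY h (gmul (cavV φ) (eDY h u))) γ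
      = -(h ^ 2 * ip2 m₁ m₂ φ (vavC (gmul (eDY h u) (eDY h γ)))) := by
  rcases eq_or_ne h 0 with h0 | hh
  · subst h0; norm_num
  set F : GridFn := gmul (cavV φ) (eDY h u) with hFdef
  set W : GridFn := fun i j => vDY h F i j * γ i j with hWdef
  set Q : GridFn := fun i j => (u i (j + 1) - u i j) * (γ i (j + 1) - γ i j) with hQdef
  set P : GridFn := fun i j => h * (F i j * γ i (j + 1)) with hPdef
  set R1 : GridFn := fun i j => φ (i + 1) j * Q i j with hR1def
  set R2 : GridFn := fun i j => φ i (j + 1) * Q i j with hR2def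
  set R3 : GridFn := fun i j => φ (i + 1) (j + 1) * Q i j with hR3def
  -- periodicity facts
  have hF1 : ∀ i j, F (i + m₁) j = F i j := by
    intro i j; simp only [hFdef, gmul, cavV, eDY]
    rw [show i + m₁ + 1 = i + 1 + m₁ by ring]
    simp only [hφ1, hu1]
  have hF2 : ∀ i j, F i (j + m₂) = F i j := by
    intro i j; simp only [hFdef, gmul, cavV, eDY]
    rw [show j + m₂ + 1 = j + 1 + m₂ by ring]
    simp only [hφ2, hu2]
  have hW1 : ∀ i j, W (i + m₁) j = W i j := by
    intro i j; simp only [hWdef, vDY, hF1, hγ1]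
  have hQ1 : ∀ i j, Q (i + m₁) j = Q i j := by
    intro i j; simp only [hQdef, hu1, hγ1]
  have hQ2 : ∀ i j, Q i (j + m₂) = Q i j := by
    intro i j; simp only [hQdef]
    rw [show j + m₂ + 1 = j + 1 + m₂ by ring]
    simp only [hu2, hγ2]
  have hP2 : ∀ i j, P i (j + m₂) = P i j := by
    intro i j; simp only [hPdef, hF2]
    rw [show j + m₂ + 1 = j + 1 + m₂ by ring]
    rw [hγ2]
  have hR11 : ∀ i j, R1 (i + m₁) j = R1 i j := by
    intro i j; simp only [hR1def, hQ1]
    rw [show i + m₁ + 1 = i + 1 + m₁ by ring, hφ1]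
  have hR22 : ∀ i j, R2 i (j + m₂) = R2 i j := by
    intro i j; simp only [hR2def, hQ2]
    rw [show j + m₂ + 1 = j + 1 + m₂ by ring, hφ2]
  have hR31 : ∀ i j, R3 (i + m₁) j = R3 i j := by
    intro i j; simp only [hR3def, hQ1]
    rw [show i + m₁ + 1 = i + 1 + m₁ by ring, hφ1]
  have hR32 : ∀ i j, R3 i (j + m₂) = R3 i j := by
    intro i j; simp only [hR3def, hQ2]
    rw [show j + m₂ + 1 = j + 1 + m₂ by ring, hφ2]
  -- the left-hand side
  have lhs1 : ipEW m₁ m₂ (vDY h F) γ = S2 m₁ m₂ (fun i j => (W i j + W (i - 1) j) / 2) := by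
    simp only [hWdef, ipEW, ip2, S2, aX, gmul, oneG, mul_one]
  have step1 : S2 m₁ m₂ (fun i j => (W i j + W (i - 1) j) / 2) = S2 m₁ m₂ W := by
    calc S2 m₁ m₂ (fun i j => (W i j + W (i - 1) j) / 2)
        = S2 m₁ m₂ (fun i j => W i j + W (i - 1) j) / 2 := S2_div m₁ m₂ _ 2
      _ = (S2 m₁ m₂ W + S2 m₁ m₂ (fun i j => W (i - 1) j)) / 2 :=
          congrArg (· / 2) (S2_add m₁ m₂ W (fun i j => W (i - 1) j))
      _ = (S2 m₁ m₂ W + S2 m₁ m₂ W) / 2 := by rw [S2_shiftI_sub m₁ m₂ W hW1]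
      _ = S2 m₁ m₂ W := by ring
  have sR1 : S2 m₁ m₂ R1 = S2 m₁ m₂ (fun i j => φ i j * Q (i - 1) j) := by
    rw [← S2_shiftI_sub m₁ m₂ R1 hR11]
    exact S2_congr m₁ m₂ (fun i j => by
      simp only [hR1def]; rw [show i - 1 + 1 = i by ring])
  have sR2 : S2 m₁ m₂ R2 = S2 m₁ m₂ (fun i j => φ i j * Q i (j - 1)) := by
    rw [← S2_shiftJ_sub m₁ m₂ R2 hR22]
    exact S2_congr m₁ m₂ (fun i j => by
      simp only [hR2def]; rw [show j - 1 + 1 = j by ring])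
  have sR3 : S2 m₁ m₂ R3 = S2 m₁ m₂ (fun i j => φ i j * Q (i - 1) (j - 1)) := by
    have t1 : S2 m₁ m₂ (fun i j => R3 (i - 1) j) = S2 m₁ m₂ R3 :=
      S2_shiftI_sub m₁ m₂ R3 hR31
    have t2 : S2 m₁ m₂ (fun i j => R3 (i - 1) (j - 1))
        = S2 m₁ m₂ (fun i j => R3 (i - 1) j) :=
      S2_shiftJ_sub m₁ m₂ (fun i j => R3 (i - 1) j) (fun i j => hR32 (i - 1) j)
    rw [← t1, ← t2]
    exact S2_congr m₁ m₂ (fun i j => by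
      simp only [hR3def]
      rw [show i - 1 + 1 = i by ring, show j - 1 + 1 = j by ring])
  have lhsAll : h ^ 2 * ipEW m₁ m₂ (vDY h F) γ
      = -((S2 m₁ m₂ (fun i j => φ i j * Q i j) + S2 m₁ m₂ R1 + S2 m₁ m₂ R2
            + S2 m₁ m₂ R3) / 4) := by
    calc h ^ 2 * ipEW m₁ m₂ (vDY h F) γ
        = h ^ 2 * S2 m₁ m₂ W := by rw [lhs1, step1]
      _ = S2 m₁ m₂ (fun i j => h ^ 2 * W i j) := (S2_smul m₁ m₂ W (h ^ 2)).symm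
      _ = S2 m₁ m₂ (fun i j => h * (F i j * γ i j) - P i (j - 1)) :=
          S2_congr m₁ m₂ (fun i j => by
            simp only [hWdef, hPdef, vDY]
            rw [show j - 1 + 1 = j by ring]
            field_simp)
      _ = S2 m₁ m₂ (fun i j => h * (F i j * γ i j)) - S2 m₁ m₂ (fun i j => P i (j - 1)) :=
          S2_sub m₁ m₂ _ _
      _ = S2 m₁ m₂ (fun i j => h * (F i j * γ i j)) - S2 m₁ m₂ P := by
          rw [S2_shiftJ_sub m₁ m₂ P hP2]
      _ = S2 m₁ m₂ (fun i j => h * (F i j * γ i j) - P i j) := (S2_sub m₁ m₂ _ _).symm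
      _ = S2 m₁ m₂ (fun i j => -((φ i j * Q i j + R1 i j + R2 i j + R3 i j) / 4)) :=
          S2_congr m₁ m₂ (fun i j => by
            simp only [hPdef, hFdef, hQdef, hR1def, hR2def, hR3def, gmul, cavV, eDY]
            field_simp
            ring)
      _ = -(S2 m₁ m₂ (fun i j => (φ i j * Q i j + R1 i j + R2 i j + R3 i j) / 4)) :=
          S2_neg m₁ m₂ _
      _ = -(S2 m₁ m₂ (fun i j => φ i j * Q i j + R1 i j + R2 i j + R3 i j) / 4) :=
          congrArg Neg.neg (S2_div m₁ m₂ _ 4)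
      _ = -((S2 m₁ m₂ (fun i j => φ i j * Q i j) + S2 m₁ m₂ R1 + S2 m₁ m₂ R2
            + S2 m₁ m₂ R3) / 4) :=
          congrArg (fun x => -(x / 4)) (S2_add4 m₁ m₂ (fun i j => φ i j * Q i j) R1 R2 R3)
  -- the right-hand side
  have rhsAll : h ^ 2 * ip2 m₁ m₂ φ (vavC (gmul (eDY h u) (eDY h γ)))
      = (S2 m₁ m₂ (fun i j => φ i j * Q i j)
          + S2 m₁ m₂ (fun i j => φ i j * Q (i - 1) j)
          + S2 m₁ m₂ (fun i j => φ i j * Q i (j - 1))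
          + S2 m₁ m₂ (fun i j => φ i j * Q (i - 1) (j - 1))) / 4 := by
    calc h ^ 2 * ip2 m₁ m₂ φ (vavC (gmul (eDY h u) (eDY h γ)))
        = h ^ 2 * S2 m₁ m₂ (fun i j => φ i j * vavC (gmul (eDY h u) (eDY h γ)) i j) := rfl
      _ = S2 m₁ m₂ (fun i j => h ^ 2 * (φ i j * vavC (gmul (eDY h u) (eDY h γ)) i j)) :=
          (S2_smul m₁ m₂ _ (h ^ 2)).symm
      _ = S2 m₁ m₂ (fun i j =>
            (φ i j * Q (i - 1) (j - 1) + φ i j * Q i (j - 1) + φ i j * Q (i - 1) j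
              + φ i j * Q i j) / 4) :=
          S2_congr m₁ m₂ (fun i j => by
            simp only [vavC, gmul, eDY, hQdef]
            field_simp)
      _ = S2 m₁ m₂ (fun i j => φ i j * Q (i - 1) (j - 1) + φ i j * Q i (j - 1)
            + φ i j * Q (i - 1) j + φ i j * Q i j) / 4 := S2_div m₁ m₂ _ 4
      _ = (S2 m₁ m₂ (fun i j => φ i j * Q (i - 1) (j - 1))
            + S2 m₁ m₂ (fun i j => φ i j * Q i (j - 1))
            + S2 m₁ m₂ (fun i j => φ i j * Q (i - 1) j)
            + S2 m₁ m₂ (fun i j => φ i j * Q i j)) / 4 :=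
          congrArg (· / 4) (S2_add4 m₁ m₂ _ _ _ _)
      _ = _ := by ring
  rw [lhsAll, rhsAll, sR1, sR2, sR3]

/-- transpose of a grid function -/
noncomputable def Tr (f : GridFn) : GridFn := fun i j => f j i

lemma ipNS_transpose (m₁ m₂ : ℤ) (a b : GridFn) :
    ipNS m₁ m₂ a b = ipEW m₂ m₁ (Tr a) (Tr b) := by
  simp only [ipNS, ipEW, ip2, aY, aX, gmul, oneG, Tr, mul_one]
  rw [Finset.sum_comm]

lemma ip2_transpose (m₁ m₂ : ℤ) (φ ψ : GridFn) :
    ip2 m₁ m₂ φ ψ = ip2 m₂ m₁ (Tr φ) (Tr ψ) := by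
  simp only [ip2, Tr]
  rw [Finset.sum_comm]

lemma Tr_arg (h : ℝ) (φ v : GridFn) :
    Tr (vDX h (gmul (cavV φ) (eDX h v)))
      = vDY h (gmul (cavV (Tr φ)) (eDY h (Tr v))) := by
  funext i j
  simp only [Tr, vDX, vDY, gmul, cavV, eDX, eDY]
  ring

lemma Tr_vavC (h : ℝ) (v ω : GridFn) :
    Tr (vavC (gmul (eDX h v) (eDX h ω)))
      = vavC (gmul (eDY h (Tr v)) (eDY h (Tr ω))) := by
  funext i j
  simp only [Tr, vavC, gmul, eDX, eDY]
  ring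

theorem discrete_sbp_viscous_cross_direction_periodic
    (m₁ m₂ : ℤ) (h : ℝ) (φ u γ v ω : GridFn)
    (hφ : ∀ i j : ℤ, φ (i + m₁) j = φ i j ∧ φ i (j + m₂) = φ i j)
    (hu : ∀ i j : ℤ, u (i + m₁) j = u i j ∧ u i (j + m₂) = u i j)
    (hγ : ∀ i j : ℤ, γ (i + m₁) j = γ i j ∧ γ i (j + m₂) = γ i j)
    (hv : ∀ i j : ℤ, v (i + m₁) j = v i j ∧ v i (j + m₂) = v i j)
    (hω : ∀ i j : ℤ, ω (i + m₁) j = ω i j ∧ ω i (j + m₂) = ω i j) :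
    h ^ 2 * ipEW m₁ m₂ (vDY h (gmul (cavV φ) (eDY h u))) γ
        = -(h ^ 2 * ip2 m₁ m₂ φ (vavC (gmul (eDY h u) (eDY h γ)))) ∧
    h ^ 2 * ipNS m₁ m₂ (vDX h (gmul (cavV φ) (eDX h v))) ω
        = -(h ^ 2 * ip2 m₁ m₂ φ (vavC (gmul (eDX h v) (eDX h ω)))) := by
  constructor
  · exact keyY m₁ m₂ h φ u γ (fun i j => (hφ i j).1) (fun i j => (hφ i j).2)
      (fun i j => (hu i j).1) (fun i j => (hu i j).2)
      (fun i j => (hγ i j).1) (fun i j => (hγ i j).2)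
  · rw [ipNS_transpose, ip2_transpose, Tr_arg, Tr_vavC]
    exact keyY m₂ m₁ h (Tr φ) (Tr v) (Tr ω)
      (fun i j => (hφ j i).2) (fun i j => (hφ j i).1)
      (fun i j => (hv j i).2) (fun i j => (hv j i).1)
      (fun i j => (hω j i).2) (fun i j => (hω j i).1)
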